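/- In the block-orthogonal design of $N$ pairs with $\hat\varphi_k^2 = 1-\hat\rho_k$, if $\beta^0$ satisfies $\beta^0_{2k-1} \ge \beta^0_{2k} \ge \lambda/\hat\varphi_k^2$ for all $k$, then the noiseless Lasso minimizer $\beta^*$ of $\|X(\beta-\beta^0)\|_2^2 + 2\lambda\|\beta\|_1$ satisfies $\|X(\beta^* - \beta^0)\|_2^2 = 2\lambda^2\sum_{k=1}^N 1/\hat\varphi_k^2$ and $\|X(\beta^* - \beta^0)\|_2^2 + \lambda\|\beta^*\|_1 = \lambda\|\beta^0\|_1$. -/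
import Mathlib

open scoped RealInnerProductSpace

/-- exact (penalized) prediction error for the block-orthogonal design. -/
theorem stmt11 (n N : ℕ) (X : Fin N × Fin 2 → EuclideanSpace ℝ (Fin n))
    (ρ : Fin N → ℝ) (lam : ℝ) (β0 βs : Fin N × Fin 2 → ℝ)
    (hnorm : ∀ j, ‖X j‖ = 1)
    (hρ : ∀ k, ⟪X (k, 0), X (k, 1)⟫ = -ρ k)
    (hρ01 : ∀ k, 0 < ρ k ∧ ρ k < 1)
    (horth : ∀ k k' i i', k ≠ k' → ⟪X (k, i), X (k', i')⟫ = 0)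
    (hlam : 0 < lam)
    (hβ0 : ∀ k, β0 (k, 0) ≥ β0 (k, 1) ∧ β0 (k, 1) ≥ lam / (1 - ρ k))
    (hmin : ∀ β : Fin N × Fin 2 → ℝ,
      ‖∑ j, (βs j - β0 j) • X j‖ ^ 2 + 2 * lam * ∑ j, |βs j|
        ≤ ‖∑ j, (β j - β0 j) • X j‖ ^ 2 + 2 * lam * ∑ j, |β j|) :
    ‖∑ j, (βs j - β0 j) • X j‖ ^ 2 = 2 * lam ^ 2 * ∑ k, (1 - ρ k)⁻¹ ∧
    ‖∑ j, (βs j - β0 j) • X j‖ ^ 2 + lam * ∑ j, |βs j| = lam * ∑ j, |β0 j| := by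
  have hρlt : ∀ k, 0 < 1 - ρ k := fun k => by linarith [(hρ01 k).2]
  set c : Fin N → ℝ := fun k => lam / (1 - ρ k) with hc
  have hclam : ∀ k, c k * (1 - ρ k) = lam := fun k => div_mul_cancel₀ lam (hρlt k).ne'
  have hcpos : ∀ k, 0 < c k := fun k => div_pos hlam (hρlt k)
  have hcinv : ∀ k, c k = lam * (1 - ρ k)⁻¹ := fun k => div_eq_mul_inv lam _
  set βh : Fin N × Fin 2 → ℝ := fun j => β0 j - c j.1 with hβh
  have hβ0ge : ∀ j, c j.1 ≤ β0 j := by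
    rintro ⟨k, i⟩
    have h1 := (hβ0 k).1
    have h2 := (hβ0 k).2
    fin_cases i
    · show c k ≤ β0 (k, 0)
      simp only [hc]; linarith
    · show c k ≤ β0 (k, 1)
      simp only [hc]; linarith
  have hβhpos : ∀ j, 0 ≤ βh j := fun j => by
    have := hβ0ge j; simp only [hβh]; linarith
  -- inner products of columns within a block
  have hXX : ∀ (k : Fin N) (i i' : Fin 2),
      ⟪X (k, i), X (k, i')⟫ = if i = i' then 1 else -ρ k := by
    intro k i i'
    fin_cases i <;> fin_cases i'
    · rw [if_pos rfl, real_inner_self_eq_norm_sq, hnorm]; norm_num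
    · simpa using hρ k
    · rw [real_inner_comm]; simpa using hρ k
    · rw [if_pos rfl, real_inner_self_eq_norm_sq, hnorm]; norm_num
  set vh : EuclideanSpace ℝ (Fin n) := ∑ j, (βh j - β0 j) • X j with hvh
  have hXv : ∀ (k : Fin N) (i : Fin 2), ⟪X (k, i), vh⟫ = -lam := by
    intro k i
    rw [hvh, inner_sum]
    have hterm : ∀ j : Fin N × Fin 2,
        ⟪X (k, i), (βh j - β0 j) • X j⟫ = -(c j.1) * ⟪X (k, i), X j⟫ := by
      intro j
      rw [real_inner_smul_right]
      simp only [hβh]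
      ring
    rw [Finset.sum_congr rfl fun j _ => hterm j]
    rw [Fintype.sum_prod_type]
    rw [Finset.sum_eq_single k]
    · rw [Fin.sum_univ_two, hXX k i 0, hXX k i 1]
      fin_cases i <;> simp <;> linear_combination -hclam k
    · intro k' _ hk'
      rw [Fin.sum_univ_two, horth k k' i 0 (Ne.symm hk'), horth k k' i 1 (Ne.symm hk')]
      ring
    · intro h; exact absurd (Finset.mem_univ k) h
  have hvh2 : ‖vh‖ ^ 2 = 2 * lam ^ 2 * ∑ k, (1 - ρ k)⁻¹ := by
    rw [← real_inner_self_eq_norm_sq]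
    nth_rewrite 1 [hvh]
    rw [sum_inner]
    have hterm : ∀ j : Fin N × Fin 2,
        ⟪(βh j - β0 j) • X j, vh⟫ = -(c j.1) * (-lam) := by
      intro j
      rw [real_inner_smul_left, hXv j.1 j.2]
      simp only [hβh]
      ring
    rw [Finset.sum_congr rfl fun j _ => hterm j]
    rw [Fintype.sum_prod_type]
    simp only [Fin.sum_univ_two]
    rw [Finset.mul_sum]
    refine Finset.sum_congr rfl fun k _ => ?_
    rw [hcinv k]; ring
  set ds : EuclideanSpace ℝ (Fin n) := ∑ j, (βs j - βh j) • X j with hds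
  have hvs : (∑ j, (βs j - β0 j) • X j) = vh + ds := by
    rw [hvh, hds, ← Finset.sum_add_distrib]
    refine Finset.sum_congr rfl fun j _ => ?_
    rw [← add_smul]
    congr 1
    ring
  have hinner : ⟪vh, ds⟫ = lam * ((∑ j, βh j) - ∑ j, βs j) := by
    rw [hds, inner_sum]
    have hterm : ∀ j : Fin N × Fin 2,
        ⟪vh, (βs j - βh j) • X j⟫ = (βs j - βh j) * (-lam) := by
      intro j
      rw [real_inner_smul_right, real_inner_comm, hXv j.1 j.2]
    rw [Finset.sum_congr rfl fun j _ => hterm j]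
    rw [← Finset.sum_mul, Finset.sum_sub_distrib]
    ring
  have habs_h : ∀ j : Fin N × Fin 2, |βh j| = βh j := fun j => abs_of_nonneg (hβhpos j)
  have hkey := hmin βh
  rw [hvs, norm_add_sq_real, hinner, ← hvh] at hkey
  simp only [habs_h] at hkey
  have hge : (∑ j, βs j) ≤ ∑ j, |βs j| := Finset.sum_le_sum fun j _ => le_abs_self _
  have hds0 : ds = 0 := by
    have h1 : ‖ds‖ ^ 2 ≤ 0 := by nlinarith [mul_le_mul_of_nonneg_left hge hlam.le]
    have h2 : ‖ds‖ ^ 2 = 0 := le_antisymm h1 (sq_nonneg _)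
    exact norm_eq_zero.mp ((pow_eq_zero_iff two_ne_zero).mp h2)
  have hvs0 : (∑ j, (βs j - β0 j) • X j) = vh := by rw [hvs, hds0, add_zero]
  have hAH : (∑ j, βs j) = ∑ j, βh j := by
    have h0 : ⟪vh, ds⟫ = (0 : ℝ) := by rw [hds0, inner_zero_right]
    rw [hinner] at h0
    rcases mul_eq_zero.mp h0 with h | h
    · exact absurd h hlam.ne'
    · linarith
  -- Σ|βs| = Σβs
  have hBA : (∑ j, |βs j|) = ∑ j, βs j := by
    rw [hds0, norm_zero] at hkey
    nlinarith [mul_le_mul_of_nonneg_left hge hlam.le]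
  -- the c-sum identity
  have hcsum : lam * (∑ j : Fin N × Fin 2, c j.1) = 2 * lam ^ 2 * ∑ k, (1 - ρ k)⁻¹ := by
    rw [Fintype.sum_prod_type]
    simp only [Fin.sum_univ_two]
    rw [Finset.mul_sum, Finset.mul_sum]
    refine Finset.sum_congr rfl fun k _ => ?_
    rw [hcinv k]; ring
  have hβ0sum : (∑ j, |β0 j|) = (∑ j, βh j) + ∑ j : Fin N × Fin 2, c j.1 := by
    rw [← Finset.sum_add_distrib]
    refine Finset.sum_congr rfl fun j _ => ?_
    rw [abs_of_nonneg (le_trans (hcpos j.1).le (hβ0ge j))]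
    simp only [hβh]; ring
  constructor
  · rw [hvs0, hvh2]
  · rw [hvs0, hvh2, hBA, hAH, hβ0sum]
    linarith [hcsum]
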